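/- Let H be the m×(2^m−1) binary matrix whose columns are all distinct nonzero vectors of length m. For any nonempty subset T of row indices with |T| = t and any p ≥ 0, the number of p-element column-subsets Y such that the submatrix on rows T and columns Y has every row of weight exactly one and every column nonzero equals S(t,p) · 2^{(m−t)p}, where S(t,p) is the Stirling number of the second kind. -/

import Mathlib

open Finset

/-- Stirling numbers of the second kind: the number of partitions of a t-set into p
nonempty parts. -/
noncomputable def stirlingSnd (t p : ℕ) : ℕ :=
  Nat.card {P : Finpartition (Finset.univ : Finset (Fin t)) // P.parts.card = p}

namespace Stmt8Aux

variable {α β : Type*}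

def finsetIso (e : α ≃ β) : Finset α ≃o Finset β where
  toEquiv := e.finsetCongr
  map_rel_iff' {s t} := by
    simp only [Equiv.finsetCongr_apply, Finset.le_iff_subset, Finset.map_subset_map]

noncomputable def partCongr [Fintype α] [Fintype β] [DecidableEq α] [DecidableEq β] (e : α ≃ β) :
    Finpartition (univ : Finset α) ≃ Finpartition (univ : Finset β) where
  toFun P := (P.map (finsetIso e)).copy (Finset.map_univ_equiv e)
  invFun P := (P.map (finsetIso e.symm)).copy (Finset.map_univ_equiv e.symm)
  left_inv P := by
    ext b
    simp [Finpartition.copy, finsetIso, Finset.map_map]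
  right_inv P := by
    ext b
    simp [Finpartition.copy, finsetIso, Finset.map_map]

lemma partCongr_parts_card [Fintype α] [Fintype β] [DecidableEq α] [DecidableEq β] (e : α ≃ β)
    (P : Finpartition (univ : Finset α)) :
    (partCongr e P).parts.card = P.parts.card := by
  simp [partCongr, Finpartition.copy]

lemma card_partitions_eq [Fintype α] [DecidableEq α] (t p : ℕ) (h : Fintype.card α = t) :
    Nat.card {P : Finpartition (univ : Finset α) // P.parts.card = p} = stirlingSnd t p := by
  apply Nat.card_congr
  exact Equiv.subtypeEquiv (partCongr (Fintype.equivFinOfCardEq h))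
    (fun P => by rw [partCongr_parts_card])

lemma zmod2_cases (x : ZMod 2) : x = 0 ∨ x = 1 := by revert x; decide

section main

variable {m : ℕ} (H : Matrix (Fin m) (Fin (2 ^ m - 1)) (ZMod 2))
  (hinj : Function.Injective (fun j : Fin (2 ^ m - 1) => fun i => H i j))
  (hnz : ∀ j, (fun i => H i j) ≠ (0 : Fin m → ZMod 2))
  (T : Finset (Fin m)) (p : ℕ)

include hinj hnz in
lemma exU (v : Fin m → ZMod 2) (hv : v ≠ 0) : ∃! j, (fun i => H i j) = v := by
  classical
  have hcard : Fintype.card {w : Fin m → ZMod 2 // w ≠ 0} = 2 ^ m - 1 := by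
    have h2 := Fintype.card_subtype_compl (fun w : Fin m → ZMod 2 => w = 0)
    have h1 : Fintype.card {w : Fin m → ZMod 2 // w = 0} = 1 := Fintype.card_subtype_eq _
    rw [h2, h1]
    congr 1
    simp [Fintype.card_fun, ZMod.card]
  let f : Fin (2 ^ m - 1) → {w : Fin m → ZMod 2 // w ≠ 0} := fun j => ⟨fun i => H i j, hnz j⟩
  have hf : Function.Bijective f := by
    rw [Fintype.bijective_iff_injective_and_card]
    exact ⟨fun a b hab => hinj (congrArg Subtype.val hab), by simp [hcard]⟩
  obtain ⟨j, hj⟩ := hf.2 ⟨v, hv⟩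
  refine ⟨j, congrArg Subtype.val hj, fun j' hj' => hinj ?_⟩
  show (fun i => H i j') = fun i => H i j
  rw [show (fun i => H i j') = v from hj']
  exact (congrArg Subtype.val hj).symm

noncomputable def jcol (v : Fin m → ZMod 2) (hv : v ≠ 0) : Fin (2 ^ m - 1) :=
  (exU H hinj hnz v hv).choose

lemma col_jcol (v : Fin m → ZMod 2) (hv : v ≠ 0) :
    (fun i => H i (jcol H hinj hnz v hv)) = v :=
  (exU H hinj hnz v hv).choose_spec.1

lemma eq_jcol (v : Fin m → ZMod 2) (hv : v ≠ 0) (j : Fin (2 ^ m - 1))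
    (hj : (fun i => H i j) = v) : j = jcol H hinj hnz v hv :=
  (exU H hinj hnz v hv).choose_spec.2 j hj

/-- The vector with indicator of `b` on `T` and values `g` off `T`. -/
def vecOf (b : Finset {i : Fin m // i ∈ T}) (g : {i : Fin m // i ∉ T} → ZMod 2) :
    Fin m → ZMod 2 :=
  fun i => if h : i ∈ T then (if (⟨i, h⟩ : {i : Fin m // i ∈ T}) ∈ b then 1 else 0) else g ⟨i, h⟩

lemma vecOf_mem (b : Finset {i : Fin m // i ∈ T}) (g : {i : Fin m // i ∉ T} → ZMod 2)
    (i : {i : Fin m // i ∈ T}) : vecOf T b g i.1 = 1 ↔ i ∈ b := by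
  obtain ⟨i, hi⟩ := i
  simp only [vecOf, dif_pos hi]
  split_ifs with h
  · simp [h]
  · simp [h]

lemma vecOf_not_mem (b : Finset {i : Fin m // i ∈ T}) (g : {i : Fin m // i ∉ T} → ZMod 2)
    (i : {i : Fin m // i ∉ T}) : vecOf T b g i.1 = g i := by
  obtain ⟨i, hi⟩ := i
  simp only [vecOf, dif_neg hi]

lemma vecOf_ne_zero (b : Finset {i : Fin m // i ∈ T}) (g : {i : Fin m // i ∉ T} → ZMod 2)
    (hb : b.Nonempty) : vecOf T b g ≠ 0 := by
  obtain ⟨i, hi⟩ := hb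
  intro h
  have h1 : vecOf T b g i.1 = 1 := (vecOf_mem T b g i).2 hi
  rw [congrFun h i.1] at h1
  exact zero_ne_one h1

lemma vecOf_inj (b b' : Finset {i : Fin m // i ∈ T}) (g g' : {i : Fin m // i ∉ T} → ZMod 2)
    (h : vecOf T b g = vecOf T b' g') : b = b' ∧ g = g' := by
  constructor
  · ext i
    rw [← vecOf_mem T b g i, ← vecOf_mem T b' g' i, h]
  · funext i
    rw [← vecOf_not_mem T b g i, ← vecOf_not_mem T b' g' i, h]

def blockOf (j : Fin (2 ^ m - 1)) : Finset {i : Fin m // i ∈ T} :=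
  univ.filter fun i => H i.1 j = 1

lemma mem_blockOf {j : Fin (2 ^ m - 1)} {i : {i : Fin m // i ∈ T}} :
    i ∈ blockOf H T j ↔ H i.1 j = 1 := by
  simp [blockOf]

def outOf (j : Fin (2 ^ m - 1)) : {i : Fin m // i ∉ T} → ZMod 2 := fun i => H i.1 j

lemma col_eq_vec (j : Fin (2 ^ m - 1)) :
    (fun i => H i j) = vecOf T (blockOf H T j) (outOf H T j) := by
  funext i
  by_cases h : i ∈ T
  · rcases zmod2_cases (H i j) with h0 | h1
    · simp [vecOf, h, blockOf, h0]
    · simp [vecOf, h, blockOf, h1]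
  · simp [vecOf, h, outOf]

/-- The subtype of finpartitions with `p` parts. -/
abbrev SubP := {P : Finpartition (univ : Finset {i : Fin m // i ∈ T}) // P.parts.card = p}

/-- partition with `p` parts + value off `T` for each part. -/
abbrev BX := Σ P : SubP T p, ({b // b ∈ P.1.parts} → {i : Fin m // i ∉ T} → ZMod 2)

noncomputable def ψj (x : BX T p) (b : {b // b ∈ x.1.1.parts}) : Fin (2 ^ m - 1) :=
  jcol H hinj hnz (vecOf T b.1 (x.2 b)) (vecOf_ne_zero T b.1 (x.2 b) (x.1.1.nonempty_of_mem_parts b.2))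

lemma col_ψj (x : BX T p) (b : {b // b ∈ x.1.1.parts}) :
    (fun i => H i (ψj H hinj hnz T p x b)) = vecOf T b.1 (x.2 b) :=
  col_jcol H hinj hnz _ _

lemma ψj_one_iff (x : BX T p) (b : {b // b ∈ x.1.1.parts}) {i : Fin m} (hi : i ∈ T) :
    H i (ψj H hinj hnz T p x b) = 1 ↔ (⟨i, hi⟩ : {i : Fin m // i ∈ T}) ∈ b.1 := by
  rw [show H i (ψj H hinj hnz T p x b) = vecOf T b.1 (x.2 b) i from
    congrFun (col_ψj H hinj hnz T p x b) i]
  exact vecOf_mem T b.1 (x.2 b) ⟨i, hi⟩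

lemma ψj_inj (x : BX T p) {b b' : {b // b ∈ x.1.1.parts}}
    (h : ψj H hinj hnz T p x b = ψj H hinj hnz T p x b') : b = b' := by
  have hv : vecOf T b.1 (x.2 b) = vecOf T b'.1 (x.2 b') := by
    rw [← col_ψj H hinj hnz T p x b, ← col_ψj H hinj hnz T p x b', h]
  exact Subtype.ext (vecOf_inj T _ _ _ _ hv).1

noncomputable def ψY (x : BX T p) : Finset (Fin (2 ^ m - 1)) :=
  x.1.1.parts.attach.image (ψj H hinj hnz T p x)

lemma mem_ψY {x : BX T p} {j : Fin (2 ^ m - 1)} :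
    j ∈ ψY H hinj hnz T p x ↔ ∃ b, ψj H hinj hnz T p x b = j := by
  simp [ψY]

lemma card_ψY (x : BX T p) : (ψY H hinj hnz T p x).card = p := by
  rw [ψY, Finset.card_image_of_injOn (fun b _ b' _ h => ψj_inj H hinj hnz T p x h),
    Finset.card_attach]
  exact x.1.2

lemma row_count (x : BX T p) : ∀ i ∈ T, ((ψY H hinj hnz T p x).filter fun j => H i j = 1).card = 1 := by
  intro i hi
  rw [Finset.card_eq_one]
  have hu := Finset.mem_univ (⟨i, hi⟩ : {i : Fin m // i ∈ T})
  refine ⟨ψj H hinj hnz T p x ⟨x.1.1.part ⟨i, hi⟩, x.1.1.part_mem.2 hu⟩, ?_⟩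
  ext j
  simp only [Finset.mem_filter, Finset.mem_singleton]
  constructor
  · rintro ⟨hjY, hij⟩
    obtain ⟨b, rfl⟩ := (mem_ψY H hinj hnz T p).1 hjY
    have hib : (⟨i, hi⟩ : {i : Fin m // i ∈ T}) ∈ b.1 := (ψj_one_iff H hinj hnz T p x b hi).1 hij
    have hb : b = ⟨x.1.1.part ⟨i, hi⟩, x.1.1.part_mem.2 hu⟩ :=
      Subtype.ext (x.1.1.part_eq_of_mem b.2 hib).symm
    rw [hb]
  · rintro rfl
    exact ⟨(mem_ψY H hinj hnz T p).2 ⟨_, rfl⟩,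
      (ψj_one_iff H hinj hnz T p x _ hi).2 (x.1.1.mem_part hu)⟩

lemma col_cond (x : BX T p) : ∀ j ∈ ψY H hinj hnz T p x, ∃ i ∈ T, H i j = 1 := by
  intro j hj
  obtain ⟨b, rfl⟩ := (mem_ψY H hinj hnz T p).1 hj
  obtain ⟨⟨i, hi⟩, hib⟩ := x.1.1.nonempty_of_mem_parts b.2
  exact ⟨i, hi, (ψj_one_iff H hinj hnz T p x b hi).2 hib⟩

-- the Y-side (surjectivity) constructions

variable (Y : Finset (Fin (2 ^ m - 1)))

lemma row_unique (h2 : ∀ i ∈ T, (Y.filter fun j => H i j = 1).card = 1)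
    {i : Fin m} (hi : i ∈ T) {j j' : Fin (2 ^ m - 1)} (hj : j ∈ Y) (hj' : j' ∈ Y)
    (e1 : H i j = 1) (e2 : H i j' = 1) : j = j' := by
  obtain ⟨a, ha⟩ := Finset.card_eq_one.1 (h2 i hi)
  have h1 : j ∈ Y.filter fun j => H i j = 1 := Finset.mem_filter.2 ⟨hj, e1⟩
  have h1' : j' ∈ Y.filter fun j => H i j = 1 := Finset.mem_filter.2 ⟨hj', e2⟩
  rw [ha, Finset.mem_singleton] at h1 h1'
  rw [h1, h1']

lemma row_exists (h2 : ∀ i ∈ T, (Y.filter fun j => H i j = 1).card = 1)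
    {i : Fin m} (hi : i ∈ T) : ∃ j ∈ Y, H i j = 1 := by
  have := h2 i hi
  obtain ⟨a, ha⟩ := Finset.card_eq_one.1 this
  have : a ∈ Y.filter fun j => H i j = 1 := by rw [ha]; exact Finset.mem_singleton_self a
  exact ⟨a, (Finset.mem_filter.1 this).1, (Finset.mem_filter.1 this).2⟩

lemma blockOf_injOn (h2 : ∀ i ∈ T, (Y.filter fun j => H i j = 1).card = 1)
    (h3 : ∀ j ∈ Y, ∃ i ∈ T, H i j = 1) : Set.InjOn (blockOf H T) Y := by
  intro j hj j' hj' h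
  obtain ⟨i, hi, hij⟩ := h3 j hj
  have h1 : (⟨i, hi⟩ : {i : Fin m // i ∈ T}) ∈ blockOf H T j := (mem_blockOf H T).2 hij
  have h2' : (⟨i, hi⟩ : {i : Fin m // i ∈ T}) ∈ blockOf H T j' := by rw [← h]; exact h1
  exact row_unique H T Y h2 hi hj hj' hij ((mem_blockOf H T).1 h2')

noncomputable def partOf (h2 : ∀ i ∈ T, (Y.filter fun j => H i j = 1).card = 1)
    (h3 : ∀ j ∈ Y, ∃ i ∈ T, H i j = 1) :
    Finpartition (univ : Finset {i : Fin m // i ∈ T}) where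
  parts := Y.image (blockOf H T)
  supIndep := by
    rw [Finset.supIndep_iff_pairwiseDisjoint]
    intro b hb b' hb' hne
    obtain ⟨j, hj, rfl⟩ := Finset.mem_image.1 (Finset.mem_coe.1 hb)
    obtain ⟨j', hj', rfl⟩ := Finset.mem_image.1 (Finset.mem_coe.1 hb')
    simp only [Function.onFun, id_eq]
    rw [Finset.disjoint_left]
    intro a ha ha'
    exact hne (by rw [row_unique H T Y h2 a.2 hj hj' ((mem_blockOf H T).1 ha)
      ((mem_blockOf H T).1 ha')])
  sup_parts := by
    rw [Finset.eq_univ_iff_forall]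
    intro a
    obtain ⟨j, hj, hij⟩ := row_exists H T Y h2 a.2
    exact Finset.mem_sup.2 ⟨blockOf H T j, Finset.mem_image_of_mem _ hj, (mem_blockOf H T).2 hij⟩
  bot_notMem := by
    intro h
    obtain ⟨j, hj, hbj⟩ := Finset.mem_image.1 h
    obtain ⟨i, hi, hij⟩ := h3 j hj
    have : (⟨i, hi⟩ : {i : Fin m // i ∈ T}) ∈ blockOf H T j := (mem_blockOf H T).2 hij
    rw [hbj] at this
    exact absurd this (Finset.notMem_empty _)

lemma partOf_card (h1 : Y.card = p) (h2 : ∀ i ∈ T, (Y.filter fun j => H i j = 1).card = 1)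
    (h3 : ∀ j ∈ Y, ∃ i ∈ T, H i j = 1) : (partOf H T Y h2 h3).parts.card = p := by
  show (Y.image (blockOf H T)).card = p
  rw [Finset.card_image_of_injOn (blockOf_injOn H T Y h2 h3), h1]

lemma exUb (h2 : ∀ i ∈ T, (Y.filter fun j => H i j = 1).card = 1)
    (h3 : ∀ j ∈ Y, ∃ i ∈ T, H i j = 1) (b : {b // b ∈ (partOf H T Y h2 h3).parts}) :
    ∃! j, j ∈ Y ∧ blockOf H T j = b.1 := by
  obtain ⟨j, hj, hjb⟩ := Finset.mem_image.1 b.2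
  exact ⟨j, ⟨hj, hjb⟩, fun j' hj' =>
    blockOf_injOn H T Y h2 h3 hj'.1 hj (hj'.2.trans hjb.symm)⟩

noncomputable def jOf (h2 : ∀ i ∈ T, (Y.filter fun j => H i j = 1).card = 1)
    (h3 : ∀ j ∈ Y, ∃ i ∈ T, H i j = 1) (b : {b // b ∈ (partOf H T Y h2 h3).parts}) :
    Fin (2 ^ m - 1) :=
  Finset.choose (fun j => blockOf H T j = b.1) Y (exUb H T Y h2 h3 b)

lemma jOf_mem (h2 : ∀ i ∈ T, (Y.filter fun j => H i j = 1).card = 1)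
    (h3 : ∀ j ∈ Y, ∃ i ∈ T, H i j = 1) (b : {b // b ∈ (partOf H T Y h2 h3).parts}) :
    jOf H T Y h2 h3 b ∈ Y :=
  Finset.choose_mem (fun j => blockOf H T j = b.1) Y (exUb H T Y h2 h3 b)

lemma blockOf_jOf (h2 : ∀ i ∈ T, (Y.filter fun j => H i j = 1).card = 1)
    (h3 : ∀ j ∈ Y, ∃ i ∈ T, H i j = 1) (b : {b // b ∈ (partOf H T Y h2 h3).parts}) :
    blockOf H T (jOf H T Y h2 h3 b) = b.1 :=
  Finset.choose_property (fun j => blockOf H T j = b.1) Y (exUb H T Y h2 h3 b)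

noncomputable def gOf (h2 : ∀ i ∈ T, (Y.filter fun j => H i j = 1).card = 1)
    (h3 : ∀ j ∈ Y, ∃ i ∈ T, H i j = 1) (b : {b // b ∈ (partOf H T Y h2 h3).parts}) :
    {i : Fin m // i ∉ T} → ZMod 2 := outOf H T (jOf H T Y h2 h3 b)

lemma ψj_eq_jOf (h1 : Y.card = p) (h2 : ∀ i ∈ T, (Y.filter fun j => H i j = 1).card = 1)
    (h3 : ∀ j ∈ Y, ∃ i ∈ T, H i j = 1)
    (b : {b // b ∈ (partOf H T Y h2 h3).parts}) :
    ψj H hinj hnz T p ⟨⟨partOf H T Y h2 h3, partOf_card H T p Y h1 h2 h3⟩, gOf H T Y h2 h3⟩ b =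
      jOf H T Y h2 h3 b := by
  refine (eq_jcol H hinj hnz _ _ _ ?_).symm
  rw [col_eq_vec H T (jOf H T Y h2 h3 b), blockOf_jOf H T Y h2 h3 b]
  rfl

lemma ψY_partOf (h1 : Y.card = p) (h2 : ∀ i ∈ T, (Y.filter fun j => H i j = 1).card = 1)
    (h3 : ∀ j ∈ Y, ∃ i ∈ T, H i j = 1) :
    ψY H hinj hnz T p ⟨⟨partOf H T Y h2 h3, partOf_card H T p Y h1 h2 h3⟩, gOf H T Y h2 h3⟩ = Y := by
  ext j₀
  rw [mem_ψY]
  constructor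
  · rintro ⟨b, rfl⟩
    rw [ψj_eq_jOf H hinj hnz T p Y h1 h2 h3 b]
    exact jOf_mem H T Y h2 h3 b
  · intro hj₀
    refine ⟨⟨blockOf H T j₀, Finset.mem_image_of_mem _ hj₀⟩, ?_⟩
    rw [ψj_eq_jOf H hinj hnz T p Y h1 h2 h3]
    exact blockOf_injOn H T Y h2 h3 (jOf_mem H T Y h2 h3 _) hj₀
      (blockOf_jOf H T Y h2 h3 ⟨blockOf H T j₀, Finset.mem_image_of_mem _ hj₀⟩)

end main

end Stmt8Aux

open Stmt8Aux

/-- For the full-rank parity-check matrix of the Hamming code and a nonempty row subset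
`T` with `|T| = t`, the number of `p`-element column subsets `Y` such that the submatrix
on rows `T` and columns `Y` has every row of weight one and every column nonzero equals
`S(t,p) · 2^{(m−t)p}`. -/
theorem stmt8 (m : ℕ) (H : Matrix (Fin m) (Fin (2 ^ m - 1)) (ZMod 2))
    (hinj : Function.Injective (fun j : Fin (2 ^ m - 1) => fun i => H i j))
    (hnz : ∀ j, (fun i => H i j) ≠ (0 : Fin m → ZMod 2))
    (T : Finset (Fin m)) (hT : T.Nonempty) (p : ℕ) :
    Nat.card {Y : Finset (Fin (2 ^ m - 1)) // Y.card = p ∧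
        (∀ i ∈ T, (Y.filter fun j => H i j = 1).card = 1) ∧
        (∀ j ∈ Y, ∃ i ∈ T, H i j = 1)} =
      stirlingSnd T.card p * 2 ^ ((m - T.card) * p) := by
  classical
  have hbij : Function.Bijective (fun x : BX T p =>
      (⟨ψY H hinj hnz T p x, card_ψY H hinj hnz T p x, row_count H hinj hnz T p x,
        col_cond H hinj hnz T p x⟩ :
        {Y : Finset (Fin (2 ^ m - 1)) // Y.card = p ∧
          (∀ i ∈ T, (Y.filter fun j => H i j = 1).card = 1) ∧
          (∀ j ∈ Y, ∃ i ∈ T, H i j = 1)})) := by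
    constructor
    · rintro ⟨P, g⟩ ⟨Q, g'⟩ h
      have hY : ψY H hinj hnz T p ⟨P, g⟩ = ψY H hinj hnz T p ⟨Q, g'⟩ := congrArg Subtype.val h
      have main : ∀ b : {b // b ∈ P.1.parts}, ∃ hb' : b.1 ∈ Q.1.parts,
          g b = g' ⟨b.1, hb'⟩ := by
        intro b
        have hmemY : ψj H hinj hnz T p ⟨P, g⟩ b ∈ ψY H hinj hnz T p ⟨Q, g'⟩ := by
          rw [← hY]
          exact (mem_ψY H hinj hnz T p).2 ⟨b, rfl⟩
        obtain ⟨b', hb'⟩ := (mem_ψY H hinj hnz T p).1 hmemY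
        have hv : vecOf T b'.1 (g' b') = vecOf T b.1 (g b) := by
          rw [← col_ψj H hinj hnz T p ⟨Q, g'⟩ b', ← col_ψj H hinj hnz T p ⟨P, g⟩ b, hb']
        obtain ⟨hb_eq, hg_eq⟩ := vecOf_inj T _ _ _ _ hv
        refine ⟨hb_eq ▸ b'.2, ?_⟩
        have hb'' : b' = ⟨b.1, hb_eq ▸ b'.2⟩ := Subtype.ext hb_eq
        rw [← hg_eq]
        exact congrArg g' hb''
      have hsub : P.1.parts ⊆ Q.1.parts := by
        intro b hb
        obtain ⟨h', -⟩ := main ⟨b, hb⟩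
        exact h'
      have hparts : P.1.parts = Q.1.parts :=
        Finset.eq_of_subset_of_card_le hsub (by rw [P.2, Q.2])
      have hP : P = Q := Subtype.ext (Finpartition.ext hparts)
      subst hP
      have hg : g = g' := by
        funext b
        obtain ⟨hb', he⟩ := main b
        rw [he]
      rw [hg]
    · rintro ⟨Y, h1, h2, h3⟩
      exact ⟨⟨⟨partOf H T Y h2 h3, partOf_card H T p Y h1 h2 h3⟩, gOf H T Y h2 h3⟩,
        Subtype.ext (ψY_partOf H hinj hnz T p Y h1 h2 h3)⟩
  rw [← Nat.card_congr (Equiv.ofBijective _ hbij)]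
  have e2 : BX T p ≃ SubP T p × (Fin p → ({i : Fin m // i ∉ T} → ZMod 2)) :=
    (Equiv.sigmaCongrRight fun P =>
      Equiv.arrowCongr (Finset.equivFinOfCardEq P.2) (Equiv.refl _)).trans
      (Equiv.sigmaEquivProd _ _)
  rw [Nat.card_congr e2, Nat.card_prod]
  congr 1
  · exact card_partitions_eq T.card p (Fintype.card_coe T)
  · rw [Nat.card_eq_fintype_card, Fintype.card_fun]
    have hX : Fintype.card ({i : Fin m // i ∉ T} → ZMod 2) = 2 ^ (m - T.card) := by
      rw [Fintype.card_fun, ZMod.card]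
      congr 1
      rw [Fintype.card_subtype_compl, Fintype.card_fin, Fintype.card_coe]
    rw [hX, Fintype.card_fin, ← pow_mul]
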